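/- Feller boundary classification near z = 1/27: with scale density p'(z) = -1/(z^a A(z)) and speed density s'(z) = z^{a-1}T(z)/3, using A(z) ~ -2π√3(1/27 - z) and T(1/27^-) = 2π√3, one has for any r ∈ (0,1/27): ∫_r^{1/27} s(z) dp(z) = +∞ while ∫_r^{1/27} p(z) ds(z) < +∞; hence the boundary point z = 1/27 is an entrance boundary for every a ≥ 0. -/

import Mathlib

open Set Real Filter MeasureTheory

/-- Feller boundary classification near z = 1/27: with scale density
p' = -1/(z^a A(z)) and speed density s' = z^{a-1}T(z)/3, using A(z) ~ -2π√3(1/27-z)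
and T(1/27⁻) = 2π√3, for any r ∈ (0,1/27) the integral ∫_r^{1/27} s dp diverges
while ∫_r^{1/27} p ds is finite — hence z = 1/27 is an entrance boundary for all a ≥ 0. -/
theorem stmt_19 (a : ℝ) (ha : 0 ≤ a) (T A p s : ℝ → ℝ)
    (hTpos : ∀ z ∈ Ioo (0:ℝ) (1 / 27), 0 < T z)
    (hAneg : ∀ z ∈ Ioo (0:ℝ) (1 / 27), A z < 0)
    (hAT : ∀ z ∈ Ioo (0:ℝ) (1 / 27), HasDerivAt A (T z) z)
    (hTlim : Tendsto T (nhdsWithin (1 / 27) (Iio (1 / 27))) (nhds (2 * π * Real.sqrt 3)))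
    (hAasym : Tendsto (fun z => A z / (-(2 * π * Real.sqrt 3) * (1 / 27 - z)))
      (nhdsWithin (1 / 27) (Iio (1 / 27))) (nhds 1))
    (hp : ∀ z ∈ Ioo (0:ℝ) (1 / 27), HasDerivAt p (-(1 / (z ^ a * A z))) z)
    (hppos : ∀ z ∈ Ioo (0:ℝ) (1 / 27), 0 < p z)
    (hs : ∀ z ∈ Ioo (0:ℝ) (1 / 27), HasDerivAt s (z ^ (a - 1) * T z / 3) z)
    (hspos : ∀ z ∈ Ioo (0:ℝ) (1 / 27), 0 < s z)
    (r : ℝ) (hr : r ∈ Ioo (0:ℝ) (1 / 27)) :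
    ¬ IntervalIntegrable (fun z => s z * (-(1 / (z ^ a * A z)))) volume r (1 / 27) ∧
    IntervalIntegrable (fun z => p z * (z ^ (a - 1) * T z / 3)) volume r (1 / 27) := by
  have pi3 : 0 < π * Real.sqrt 3 := mul_pos Real.pi_pos (Real.sqrt_pos.mpr (by norm_num))
  set c : ℝ := 1 / 27 with hc_def
  clear_value c
  have hc0 : (0:ℝ) < c := by norm_num [hc_def]
  have hc1 : c ≤ 1 := by norm_num [hc_def]
  have hr0 : 0 < r := hr.1
  have hrc : r < c := hr.2
  -- continuity of p and s on Ioo 0 c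
  have hpcont : ContinuousOn p (Ioo 0 c) := fun z hz =>
    (hp z hz).continuousAt.continuousWithinAt
  have hscont : ContinuousOn s (Ioo 0 c) := fun z hz =>
    (hs z hz).continuousAt.continuousWithinAt
  -- positivity of the derivatives
  have hp'pos : ∀ z ∈ Ioo (0:ℝ) c, 0 < -(1 / (z ^ a * A z)) := by
    intro z hz
    have h1 : z ^ a * A z < 0 := mul_neg_of_pos_of_neg (Real.rpow_pos_of_pos hz.1 a) (hAneg z hz)
    have := one_div_neg.mpr h1
    linarith
  have hs'pos : ∀ z ∈ Ioo (0:ℝ) c, 0 < z ^ (a - 1) * T z / 3 := by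
    intro z hz
    have := Real.rpow_pos_of_pos hz.1 (a - 1)
    have := hTpos z hz
    positivity
  -- monotonicity of p and s on Ioo 0 c
  have hpmono : MonotoneOn p (Ioo 0 c) := by
    apply monotoneOn_of_hasDerivWithinAt_nonneg (convex_Ioo 0 c) hpcont
    · intro x hx
      rw [interior_Ioo] at hx ⊢
      exact (hp x hx).hasDerivWithinAt
    · intro x hx
      rw [interior_Ioo] at hx
      exact (hp'pos x hx).le
  have hsmono : MonotoneOn s (Ioo 0 c) := by
    apply monotoneOn_of_hasDerivWithinAt_nonneg (convex_Ioo 0 c) hscont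
    · intro x hx
      rw [interior_Ioo] at hx ⊢
      exact (hs x hx).hasDerivWithinAt
    · intro x hx
      rw [interior_Ioo] at hx
      exact (hs'pos x hx).le
  -- choose z0 close to c where all asymptotic bounds hold
  set M : ℝ := c ^ (a - 1) * (2 * π * Real.sqrt 3) / 3 + 1 with hM_def
  clear_value M
  have hsM : Tendsto (fun z => z ^ (a - 1) * T z / 3) (nhdsWithin c (Iio c))
      (nhds (c ^ (a - 1) * (2 * π * Real.sqrt 3) / 3)) := by
    apply Tendsto.div_const
    exact Tendsto.mul
      (((Real.continuousAt_rpow_const c (a - 1) (Or.inl hc0.ne')).tendsto).mono_left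
        nhdsWithin_le_nhds) hTlim
  have hev : ∀ᶠ z in nhdsWithin c (Iio c),
      (z ^ (a - 1) * T z / 3 < M ∧
        A z / (-(2 * π * Real.sqrt 3) * (c - z)) ∈ Ioo (1/2 : ℝ) 2) ∧ z ∈ Ioo r c := by
    refine Eventually.and (Eventually.and ?_ ?_) ?_
    · exact hsM.eventually_lt_const (by rw [hM_def]; exact lt_add_one _)
    · exact hAasym.eventually (Ioo_mem_nhds (by norm_num) (by norm_num))
    · exact eventually_mem_set.2 (Ioo_mem_nhdsLT_of_mem ⟨hrc, le_refl c⟩)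
  obtain ⟨u, hu, husub⟩ := mem_nhdsLT_iff_exists_Ioo_subset.mp hev
  set z0 : ℝ := (max u r + c) / 2 with hz0_def
  clear_value z0
  have hmaxc : max u r < c := max_lt hu hrc
  have hz0c : z0 < c := by simp only [hz0_def]; linarith
  have huz0 : u < z0 := by
    have := le_max_left u r
    simp only [hz0_def]; linarith
  have hrz0 : r < z0 := by
    have := le_max_right u r
    simp only [hz0_def]; linarith
  have hz0mem : z0 ∈ Ioo r c := ⟨hrz0, hz0c⟩
  have hz0mem0 : z0 ∈ Ioo 0 c := ⟨hr0.trans hrz0, hz0c⟩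
  have hsub : ∀ z ∈ Ioo z0 c, z ∈ Ioo u c := fun z hz => ⟨huz0.trans hz.1, hz.2⟩
  -- key bounds on (z0, c)
  have key : ∀ z ∈ Ioo z0 c,
      z ∈ Ioo r c ∧ z ^ (a - 1) * T z / 3 < M ∧
      π * Real.sqrt 3 * (c - z) ≤ -A z ∧ -A z ≤ 4 * π * Real.sqrt 3 * (c - z) := by
    intro z hz
    obtain ⟨⟨h1, h2⟩, h3⟩ := husub (hsub z hz)
    refine ⟨h3, h1, ?_, ?_⟩
    · have hD : -(2 * π * Real.sqrt 3) * (c - z) < 0 :=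
        mul_neg_of_neg_of_pos (by linarith) (by linarith [hz.2])
      have := (le_div_iff_of_neg hD).mp h2.1.le
      nlinarith
    · have hD : -(2 * π * Real.sqrt 3) * (c - z) < 0 :=
        mul_neg_of_neg_of_pos (by linarith) (by linarith [hz.2])
      have := (div_le_iff_of_neg hD).mp h2.2.le
      nlinarith
  constructor
  · intro hInt
    have hIoc : IntegrableOn (fun z => s z * (-(1 / (z ^ a * A z)))) (Ioc r c) volume :=
      (intervalIntegrable_iff_integrableOn_Ioc_of_le hrc.le).mp hInt
    have hIoo1 : IntegrableOn (fun z => s z * (-(1 / (z ^ a * A z)))) (Ioo z0 c) volume :=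
      hIoc.mono_set (fun x hx => ⟨hrz0.trans hx.1, hx.2.le⟩)
    have hsz0 : 0 < s z0 := hspos z0 hz0mem0
    set ε : ℝ := s z0 / (4 * π * Real.sqrt 3) with hε_def
    have hε : 0 < ε := by rw [hε_def]; exact div_pos hsz0 (by positivity)
    have hbound : ∀ z ∈ Ioo z0 c, ‖(z - c)⁻¹‖ ≤ (1/ε) * (s z * (-(1 / (z ^ a * A z)))) := by
      intro z hz
      obtain ⟨hz3, _, _, hAub⟩ := key z hz
      have hz0cm : z ∈ Ioo 0 c := ⟨hr0.trans hz3.1, hz3.2⟩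
      have hcz : 0 < c - z := by linarith [hz.2]
      have hza : 0 < z ^ a := Real.rpow_pos_of_pos hz0cm.1 a
      have hAz : 0 < -A z := by linarith [hAneg z hz0cm]
      have hrw : -(1 / (z ^ a * A z)) = (z ^ a * (-A z))⁻¹ := by
        rw [one_div, mul_neg, ← neg_inv]
      have hza1 : z ^ a ≤ 1 := Real.rpow_le_one hz0cm.1.le (by linarith [hz0cm.2]) ha
      have hmul : z ^ a * (-A z) ≤ 4 * π * Real.sqrt 3 * (c - z) := by
        calc z ^ a * (-A z) ≤ 1 * (4 * π * Real.sqrt 3 * (c - z)) :=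
              mul_le_mul hza1 hAub hAz.le zero_le_one
          _ = 4 * π * Real.sqrt 3 * (c - z) := one_mul _
      have hinv : (4 * π * Real.sqrt 3 * (c - z))⁻¹ ≤ (z ^ a * (-A z))⁻¹ :=
        inv_anti₀ (by positivity) hmul
      have hslb : s z0 ≤ s z := hsmono hz0mem0 hz0cm hz.1.le
      have h1 : s z0 * (4 * π * Real.sqrt 3 * (c - z))⁻¹ ≤ s z * (z ^ a * (-A z))⁻¹ :=
        mul_le_mul hslb hinv (by positivity) (hspos z hz0cm).le
      have hnorm : ‖(z - c)⁻¹‖ = (c - z)⁻¹ := by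
        rw [norm_inv, Real.norm_eq_abs, abs_sub_comm, abs_of_pos hcz]
      rw [hnorm, hrw]
      have heq : (1/ε) * (s z0 * (4 * π * Real.sqrt 3 * (c - z))⁻¹) = (c - z)⁻¹ := by
        rw [hε_def]
        field_simp
      calc (c - z)⁻¹ = (1/ε) * (s z0 * (4 * π * Real.sqrt 3 * (c - z))⁻¹) := heq.symm
        _ ≤ (1/ε) * (s z * (z ^ a * (-A z))⁻¹) :=
            mul_le_mul_of_nonneg_left h1 (by positivity)
    have hint2 : IntegrableOn (fun z => (z - c)⁻¹) (Ioo z0 c) volume := by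
      apply Integrable.mono' (hIoo1.const_mul (1/ε))
      · exact ((measurable_id.sub_const c).inv).aestronglyMeasurable
      · rw [ae_restrict_iff' measurableSet_Ioo]
        exact ae_of_all _ hbound
    have hII : IntervalIntegrable (fun z => (z - c)⁻¹) volume z0 c :=
      (intervalIntegrable_iff_integrableOn_Ioc_of_le hz0c.le).mpr
        ((integrableOn_Ioc_iff_integrableOn_Ioo).mpr hint2)
    rcases intervalIntegrable_sub_inv_iff.mp hII with h | h
    · exact hz0c.ne h
    · exact h right_mem_uIcc
  · -- integrability of p * s'
    set C1 : ℝ := (r ^ a * (π * Real.sqrt 3))⁻¹ with hC1_def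
    clear_value C1
    have hra : 0 < r ^ a := Real.rpow_pos_of_pos hr0 a
    have hC1 : 0 < C1 := by rw [hC1_def]; positivity
    have hp'le : ∀ z ∈ Ioo z0 c, -(1 / (z ^ a * A z)) ≤ C1 * (c - z)⁻¹ := by
      intro z hz
      obtain ⟨hz3, _, hAlb, _⟩ := key z hz
      have hz0cm : z ∈ Ioo 0 c := ⟨hr0.trans hz3.1, hz3.2⟩
      have hcz : 0 < c - z := by linarith [hz.2]
      have hAz : 0 < -A z := by linarith [hAneg z hz0cm]
      have hrw : -(1 / (z ^ a * A z)) = (z ^ a * (-A z))⁻¹ := by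
        rw [one_div, mul_neg, ← neg_inv]
      have hzra : r ^ a ≤ z ^ a := Real.rpow_le_rpow hr0.le hz3.1.le ha
      have hmul : r ^ a * (π * Real.sqrt 3 * (c - z)) ≤ z ^ a * (-A z) :=
        mul_le_mul hzra hAlb (by positivity) (Real.rpow_pos_of_pos hz0cm.1 a).le
      rw [hrw]
      calc (z ^ a * (-A z))⁻¹ ≤ (r ^ a * (π * Real.sqrt 3 * (c - z)))⁻¹ :=
            inv_anti₀ (by positivity) hmul
        _ = C1 * (c - z)⁻¹ := by
            rw [hC1_def]
            field_simp
    set K : ℝ := p z0 * Real.sqrt (c - z0) + 2 * C1 * Real.sqrt (c - z0) with hK_def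
    clear_value K
    have hcz0 : 0 < c - z0 := by linarith
    have hsq0 : 0 < Real.sqrt (c - z0) := Real.sqrt_pos.mpr hcz0
    have hpz0 : 0 < p z0 := hppos z0 hz0mem0
    have hK : 0 < K := by rw [hK_def]; positivity
    have hM : 0 < M := by
      rw [hM_def]
      have : 0 < c ^ (a - 1) := Real.rpow_pos_of_pos hc0 (a - 1)
      positivity
    -- ψ = φ - p is monotone on Ico z0 c, where φ x = K * (sqrt (c-x))⁻¹
    have hψmono : MonotoneOn (fun x => K * (Real.sqrt (c - x))⁻¹ - p x) (Ico z0 c) := by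
      apply monotoneOn_of_hasDerivWithinAt_nonneg (convex_Ico z0 c)
        (f' := fun x => K * ((c - x) * (2 * Real.sqrt (c - x)))⁻¹ - -(1 / (x ^ a * A x)))
      · apply ContinuousOn.sub
        · apply ContinuousOn.mul continuousOn_const
          apply ContinuousOn.inv₀
          · exact (Real.continuous_sqrt.comp (continuous_const.sub continuous_id)).continuousOn
          · intro x hx
            exact (Real.sqrt_pos.mpr (by linarith [hx.2] : (0:ℝ) < c - x)).ne'
        · exact hpcont.mono (fun x hx => ⟨hr0.trans (hrz0.trans_le hx.1), hx.2⟩)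
      · intro x hx
        rw [interior_Ico] at hx ⊢
        have hcx : 0 < c - x := by linarith [hx.2]
        have hsqx : 0 < Real.sqrt (c - x) := Real.sqrt_pos.mpr hcx
        have hxm : x ∈ Ioo 0 c := ⟨hr0.trans (hrz0.trans hx.1), hx.2⟩
        have hd1 : HasDerivAt (fun y => Real.sqrt (c - y)) ((0 - 1) / (2 * Real.sqrt (c - x))) x :=
          HasDerivAt.sqrt ((hasDerivAt_const x c).sub (hasDerivAt_id x)) hcx.ne'
        have hd2 := ((hd1.inv hsqx.ne').const_mul K).sub (hp x hxm)
        have heq : K * (-((0 - 1) / (2 * Real.sqrt (c - x))) / Real.sqrt (c - x) ^ 2)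
            = K * ((c - x) * (2 * Real.sqrt (c - x)))⁻¹ := by
          rw [show Real.sqrt (c - x) ^ 2 = c - x from Real.sq_sqrt hcx.le]
          field_simp
          all_goals
            first
            | ring1
            | exact Or.inl trivial
            | exact Or.inl (by ring1)
        rw [← heq]
        exact hd2.hasDerivWithinAt
      · intro x hx
        rw [interior_Ico] at hx
        have hcx : 0 < c - x := by linarith [hx.2]
        have hsqx : 0 < Real.sqrt (c - x) := Real.sqrt_pos.mpr hcx
        have hle := hp'le x hx
        have hsqle : Real.sqrt (c - x) ≤ Real.sqrt (c - z0) :=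
          Real.sqrt_le_sqrt (by linarith [hx.1])
        have h2 : 2 * C1 * Real.sqrt (c - x) ≤ K := by
          rw [hK_def]
          nlinarith
        have e : K * ((c - x) * (2 * Real.sqrt (c - x)))⁻¹
            = (K / (2 * Real.sqrt (c - x))) * (c - x)⁻¹ := by
          field_simp
          all_goals
            first
            | ring1
            | exact Or.inl trivial
            | exact Or.inl (by ring1)
        have hC1le : C1 ≤ K / (2 * Real.sqrt (c - x)) := by
          rw [le_div_iff₀ (by positivity)]
          linarith
        have : C1 * (c - x)⁻¹ ≤ K * ((c - x) * (2 * Real.sqrt (c - x)))⁻¹ := by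
          rw [e]
          exact mul_le_mul_of_nonneg_right hC1le (by positivity)
        linarith
    -- hence p is dominated by φ on (z0, c)
    have hpbound : ∀ z ∈ Ioo z0 c, p z ≤ K * (Real.sqrt (c - z))⁻¹ := by
      intro z hz
      have h1 := hψmono (left_mem_Ico.mpr hz0c) ⟨hz.1.le, hz.2⟩ hz.1.le
      have h2 : K * (Real.sqrt (c - z0))⁻¹ = p z0 + 2 * C1 := by
        rw [hK_def]
        field_simp
      simp only at h1
      rw [h2] at h1
      linarith
    -- measurability of the integrand
    have hmeas : ∀ t : Set ℝ, MeasurableSet t → t ⊆ Ioo 0 c →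
        AEStronglyMeasurable (fun z => p z * (z ^ (a - 1) * T z / 3))
          (volume.restrict t) := by
      intro t ht htsub
      have h1 : AEStronglyMeasurable (fun z => p z * (z ^ (a - 1) * deriv A z / 3))
          (volume.restrict t) := by
        simp only [div_eq_mul_inv]
        apply AEStronglyMeasurable.mul
        · exact (hpcont.mono htsub).aestronglyMeasurable ht
        · apply AEStronglyMeasurable.mul
          · apply AEStronglyMeasurable.mul
            · refine ContinuousOn.aestronglyMeasurable ?_ ht
              intro x hx
              exact (Real.continuousAt_rpow_const x (a - 1)
                (Or.inl (htsub hx).1.ne')).continuousWithinAt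
            · exact (measurable_deriv A).aestronglyMeasurable
          · exact aestronglyMeasurable_const
      apply h1.congr
      rw [EventuallyEq, ae_restrict_iff' ht]
      apply ae_of_all
      intro z hz
      rw [(hAT z (htsub hz)).deriv]
    -- the dominating function near c is integrable
    have hdom : IntegrableOn (fun x => M * (K * (Real.sqrt (c - x))⁻¹)) (Ioc z0 c) volume := by
      apply intervalIntegral.integrableOn_deriv_of_nonneg (g := fun x => -(2 * M * K) * Real.sqrt (c - x))
      · exact (continuous_const.mul (Real.continuous_sqrt.comp
          (continuous_const.sub continuous_id))).continuousOn
      · intro x hx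
        have hcx : 0 < c - x := by linarith [hx.2]
        have hsqx : 0 < Real.sqrt (c - x) := Real.sqrt_pos.mpr hcx
        have hd1 : HasDerivAt (fun y => Real.sqrt (c - y)) ((0 - 1) / (2 * Real.sqrt (c - x))) x :=
          HasDerivAt.sqrt ((hasDerivAt_const x c).sub (hasDerivAt_id x)) hcx.ne'
        have hd2 := hd1.const_mul (-(2 * M * K))
        have heq : -(2 * M * K) * ((0 - 1) / (2 * Real.sqrt (c - x)))
            = M * (K * (Real.sqrt (c - x))⁻¹) := by
          field_simp
          all_goals
            first
            | ring1
            | exact Or.inl trivial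
            | exact Or.inl (by ring1)
        rw [← heq]
        exact hd2
      · intro x hx
        exact mul_nonneg hM.le (mul_nonneg hK.le (inv_nonneg.mpr (Real.sqrt_nonneg _)))
    -- integrability near c
    have piece2 : IntegrableOn (fun z => p z * (z ^ (a - 1) * T z / 3)) (Ioo z0 c) volume := by
      apply Integrable.mono' (hdom.mono_set Ioo_subset_Ioc_self)
        (hmeas _ measurableSet_Ioo (fun x hx => ⟨hr0.trans (hrz0.trans hx.1), hx.2⟩))
      rw [ae_restrict_iff' measurableSet_Ioo]
      apply ae_of_all
      intro z hz
      obtain ⟨hz3, hs'M, _, _⟩ := key z hz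
      have hzm : z ∈ Ioo 0 c := ⟨hr0.trans hz3.1, hz3.2⟩
      have hfpos : 0 < p z * (z ^ (a - 1) * T z / 3) :=
        mul_pos (hppos z hzm) (hs'pos z hzm)
      rw [Real.norm_eq_abs, abs_of_pos hfpos]
      calc p z * (z ^ (a - 1) * T z / 3)
          ≤ (K * (Real.sqrt (c - z))⁻¹) * M := by
            apply mul_le_mul (hpbound z hz) hs'M.le (hs'pos z hzm).le
            exact mul_nonneg hK.le (inv_nonneg.mpr (Real.sqrt_nonneg _))
        _ = M * (K * (Real.sqrt (c - z))⁻¹) := by ring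
    -- integrability away from c
    have piece1 : IntegrableOn (fun z => p z * (z ^ (a - 1) * T z / 3)) (Ioc r z0) volume := by
      have hIccsub : Icc r z0 ⊆ Ioo 0 c :=
        fun x hx => ⟨hr0.trans_le hx.1, lt_of_le_of_lt hx.2 hz0c⟩
      have hIocsub : Ioc r z0 ⊆ Ioo 0 c :=
        fun x hx => ⟨hr0.trans hx.1, lt_of_le_of_lt hx.2 hz0c⟩
      have hs'int : IntegrableOn (fun z => z ^ (a - 1) * T z / 3) (Ioc r z0) volume := by
        apply intervalIntegral.integrableOn_deriv_of_nonneg (hscont.mono hIccsub)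
        · intro x hx
          exact hs x ⟨hr0.trans hx.1, hx.2.trans hz0c⟩
        · intro x hx
          exact (hs'pos x ⟨hr0.trans hx.1, hx.2.trans hz0c⟩).le
      apply Integrable.mono' (hs'int.const_mul (p z0)) (hmeas _ measurableSet_Ioc hIocsub)
      rw [ae_restrict_iff' measurableSet_Ioc]
      apply ae_of_all
      intro z hz
      have hzm : z ∈ Ioo 0 c := hIocsub hz
      have hfpos : 0 < p z * (z ^ (a - 1) * T z / 3) :=
        mul_pos (hppos z hzm) (hs'pos z hzm)
      rw [Real.norm_eq_abs, abs_of_pos hfpos]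
      exact mul_le_mul_of_nonneg_right (hpmono hzm hz0mem0 hz.2) (hs'pos z hzm).le
    have hall : IntegrableOn (fun z => p z * (z ^ (a - 1) * T z / 3)) (Ioc r c) volume := by
      rw [← Ioc_union_Ioc_eq_Ioc hrz0.le hz0c.le]
      exact piece1.union ((integrableOn_Ioc_iff_integrableOn_Ioo).mpr piece2)
    exact (intervalIntegrable_iff_integrableOn_Ioc_of_le hrc.le).mpr hall
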